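/- Let (X, Σ, μ) be a σ-finite non-atomic measure space, and let Φ₁, Φ₂, Φ₃ be Young functions with Φ₁(xy) ≤ Φ₂(x) + Φ₃(y) for all x, y ≥ 0. Then the multiplication operator M_u: L^{Φ₁}(Σ) → L^{Φ₂}(Σ) is bounded if and only if M_u = 0 (i.e., u = 0 μ-a.e.). -/

import Mathlib

open MeasureTheory Filter Topology

/-- A Young function: continuous, convex, even, vanishing exactly at 0,
with superlinear growth at infinity. -/
structure YoungFunction where
  toFun : ℝ → ℝ
  continuous' : Continuous toFun
  convexOn' : ConvexOn ℝ Set.univ toFun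
  even' : ∀ x, toFun (-x) = toFun x
  zero_iff' : ∀ x, toFun x = 0 ↔ x = 0
  tendsto_atTop' : Tendsto (fun x => toFun x / x) atTop atTop

instance : CoeFun YoungFunction fun _ => ℝ → ℝ := ⟨YoungFunction.toFun⟩

variable {X : Type*} [MeasurableSpace X]

/-- Membership in the Orlicz space `L^Φ(μ)`. -/
def MemOrlicz (Φ : YoungFunction) (μ : Measure X) (f : X → ℝ) : Prop :=
  AEStronglyMeasurable f μ ∧ ∃ k > 0, Integrable (fun x => Φ (k * f x)) μ

/-- The Luxemburg norm on the Orlicz space `L^Φ(μ)`. -/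
noncomputable def luxNorm (Φ : YoungFunction) (μ : Measure X) (f : X → ℝ) : ℝ :=
  sInf {k : ℝ | 0 < k ∧ ∫ x, Φ (f x / k) ∂μ ≤ 1}

/-- The generalized (right) inverse of a Young function on `[0,∞)`. -/
noncomputable def yInv (Φ : YoungFunction) (y : ℝ) : ℝ :=
  sSup {x : ℝ | 0 ≤ x ∧ Φ x ≤ y}

/-- `Φ` satisfies the `Δ₂` condition globally. -/
def YoungDeltaTwo (Φ : YoungFunction) : Prop :=
  ∃ k > 0, ∀ x : ℝ, 0 ≤ x → Φ (2 * x) ≤ k * Φ x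

/-- `Φ` satisfies the `Δ'` condition globally, with constant `c`. -/
def YoungDeltaPrime (Φ : YoungFunction) (c : ℝ) : Prop :=
  0 < c ∧ ∀ x y : ℝ, 0 ≤ x → 0 ≤ y → Φ (x * y) ≤ c * Φ x * Φ y

/-- `Φ` satisfies the `∇'` condition globally, with constant `b`. -/
def YoungNablaPrime (Φ : YoungFunction) (b : ℝ) : Prop :=
  0 < b ∧ ∀ x y : ℝ, 0 ≤ x → 0 ≤ y → Φ x * Φ y ≤ Φ (b * x * y)

/-- `Φ ≺ Ψ` : `Φ` is weaker than `Ψ`. -/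
def YoungWeaker (Φ Ψ : YoungFunction) : Prop :=
  ∃ a > 0, ∃ x₀ : ℝ, 0 ≤ x₀ ∧ ∀ x : ℝ, x₀ ≤ x → Φ x ≤ Ψ (a * x)

/-- `A` is an atom of the measure `μ`. -/
def IsAtomSet (μ : Measure X) (A : Set X) : Prop :=
  MeasurableSet A ∧ 0 < μ A ∧
    ∀ B : Set X, MeasurableSet B → B ⊆ A → μ B = 0 ∨ μ B = μ A

/-- `μ` is non-atomic on the set `S`. -/
def NonAtomicOn (μ : Measure X) (S : Set X) : Prop :=
  ∀ A : Set X, A ⊆ S → ¬ IsAtomSet μ A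

/-- A linear map between Orlicz spaces (given as a map on functions) is bounded. -/
def OrliczBounded (Φ₁ Φ₂ : YoungFunction) (μ : Measure X)
    (Tmap : (X → ℝ) → (X → ℝ)) : Prop :=
  ∃ C > 0, ∀ f : X → ℝ, MemOrlicz Φ₁ μ f →
    MemOrlicz Φ₂ μ (Tmap f) ∧ luxNorm Φ₂ μ (Tmap f) ≤ C * luxNorm Φ₁ μ f

/-- The atomic decomposition of a σ-finite measure space: `X = (⋃ n, A n) ∪ B`
with the `A n` pairwise disjoint atoms of finite measure and `B` non-atomic. -/
def AtomicDecomposition (μ : Measure X) (A : ℕ → Set X) (B : Set X) : Prop :=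
  (∀ n, IsAtomSet μ (A n)) ∧ (∀ n, μ (A n) < ⊤) ∧
    Pairwise (Function.onFun Disjoint A) ∧ (∀ n, Disjoint (A n) B) ∧
    MeasurableSet B ∧ NonAtomicOn μ B ∧ (⋃ n, A n) ∪ B = Set.univ


namespace YoungFunction
variable (Φ : YoungFunction)

lemma map_zero : Φ 0 = 0 := (Φ.zero_iff' 0).mpr rfl

lemma nonneg (x : ℝ) : 0 ≤ Φ x := by
  have h := Φ.convexOn'.2 (Set.mem_univ x) (Set.mem_univ (-x))
    (by norm_num : (0:ℝ) ≤ 1/2) (by norm_num : (0:ℝ) ≤ 1/2) (by norm_num)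
  simp only [smul_eq_mul, Φ.even'] at h
  have : (1/2 : ℝ) * x + 1/2 * (-x) = 0 := by ring
  rw [this, Φ.map_zero] at h
  linarith

lemma mono {a b : ℝ} (ha : 0 ≤ a) (hab : a ≤ b) : Φ a ≤ Φ b := by
  rcases eq_or_lt_of_le (ha.trans hab) with hb | hb
  · have : a = 0 := le_antisymm (hab.trans hb.symm.le) ha
    rw [this, ← hb]
  · have h := Φ.convexOn'.2 (Set.mem_univ 0) (Set.mem_univ b)
      (by rw [sub_nonneg]; exact (div_le_one hb).2 hab : (0:ℝ) ≤ 1 - a/b)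
      (by positivity : (0:ℝ) ≤ a/b) (by ring)
    simp only [smul_eq_mul, mul_zero, zero_add, Φ.map_zero, mul_zero, zero_add] at h
    rw [div_mul_cancel₀ _ hb.ne'] at h
    calc Φ a ≤ (a/b) * Φ b := by
          have := Φ.nonneg b
          nlinarith [h]
      _ ≤ Φ b := by
          have h1 : a/b ≤ 1 := (div_le_one hb).2 hab
          nlinarith [Φ.nonneg b]

lemma abs_map (x : ℝ) : Φ |x| = Φ x := by
  rcases abs_cases x with ⟨h, _⟩ | ⟨h, _⟩
  · rw [h]
  · rw [h, Φ.even']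

lemma three_mul (s : ℝ) : 3 * Φ s ≤ Φ (3 * s) := by
  have h := Φ.convexOn'.2 (Set.mem_univ (3*s)) (Set.mem_univ 0)
    (by norm_num : (0:ℝ) ≤ 1/3) (by norm_num : (0:ℝ) ≤ 2/3) (by norm_num)
  simp only [smul_eq_mul, mul_zero, add_zero, Φ.map_zero] at h
  have : (1/3 : ℝ) * (3 * s) = s := by ring
  rw [this] at h
  linarith

lemma tendsto_top : Tendsto Φ.toFun atTop atTop := by
  rw [tendsto_atTop]
  intro M
  have h1 : ∀ᶠ x in atTop, max M 0 ≤ Φ x / x := (tendsto_atTop.1 Φ.tendsto_atTop' _)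
  have h2 : ∀ᶠ x : ℝ in atTop, 1 ≤ x := eventually_ge_atTop 1
  filter_upwards [h1, h2] with x hx h1x
  have hx0 : 0 < x := lt_of_lt_of_le one_pos h1x
  have : max M 0 * x ≤ Φ x := by
    rw [← div_mul_cancel₀ (Φ.toFun x) hx0.ne']
    exact mul_le_mul_of_nonneg_right hx hx0.le
  calc M ≤ max M 0 := le_max_left _ _
    _ ≤ max M 0 * x := le_mul_of_one_le_right (le_max_right _ _) h1x
    _ ≤ Φ x := this

lemma exists_eq {v : ℝ} (hv : 0 < v) : ∃ s > 0, Φ s = v := by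
  obtain ⟨b, hb⟩ := (tendsto_atTop.1 Φ.tendsto_top v).exists
  have hb' : v ≤ Φ |b| := by rw [Φ.abs_map]; exact hb
  have : v ∈ Set.Icc (Φ.toFun 0) (Φ.toFun |b|) := by
    rw [Φ.map_zero]; exact ⟨hv.le, hb'⟩
  obtain ⟨s, hs, hsv⟩ := intermediate_value_Icc (abs_nonneg b) Φ.continuous'.continuousOn this
  refine ⟨s, ?_, hsv⟩
  rcases lt_or_eq_of_le hs.1 with h | h
  · exact h
  · exfalso; rw [← h, Φ.map_zero] at hsv; exact hv.ne hsv

end YoungFunction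

section AuxMeasure
variable {μ : Measure X}

lemma aux_halve (hna : NonAtomicOn μ Set.univ) {S : Set X} (hS : MeasurableSet S)
    (h0 : 0 < μ S) (hfin : μ S < ⊤) :
    ∃ E, E ⊆ S ∧ MeasurableSet E ∧ 0 < μ E ∧ μ E ≤ μ S / 2 := by
  have hnot := hna S (Set.subset_univ S)
  rw [IsAtomSet] at hnot
  push_neg at hnot
  obtain ⟨B, hBm, hBS, hB0, hBS'⟩ := hnot hS h0
  have hB0' : 0 < μ B := pos_iff_ne_zero.2 hB0
  have hBle : μ B ≤ μ S := measure_mono hBS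
  have hBlt : μ B < μ S := lt_of_le_of_ne hBle hBS'
  rcases le_or_gt (μ B) (μ S / 2) with h | h
  · exact ⟨B, hBS, hBm, hB0', h⟩
  · refine ⟨S \ B, Set.diff_subset, hS.diff hBm, ?_, ?_⟩
    · rw [measure_diff hBS hBm.nullMeasurableSet (hBlt.trans hfin).ne]
      exact tsub_pos_of_lt hBlt
    · rw [measure_diff hBS hBm.nullMeasurableSet (hBlt.trans hfin).ne]
      rw [tsub_le_iff_right]
      calc μ S = μ S / 2 + μ S / 2 := (ENNReal.add_halves _).symm
        _ ≤ μ S / 2 + μ B := by gcongr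

lemma aux_exists_small (hna : NonAtomicOn μ Set.univ) {S : Set X} (hS : MeasurableSet S)
    (h0 : 0 < μ S) (hfin : μ S < ⊤) {δ : ENNReal} (hδ : 0 < δ) :
    ∃ E, E ⊆ S ∧ MeasurableSet E ∧ 0 < μ E ∧ μ E ≤ δ := by
  have key : ∀ n : ℕ, ∃ E, E ⊆ S ∧ MeasurableSet E ∧ 0 < μ E ∧ μ E ≤ μ S * 2⁻¹ ^ n := by
    intro n
    induction n with
    | zero => exact ⟨S, subset_rfl, hS, h0, by simp⟩
    | succ n ih =>
      obtain ⟨E, hES, hEm, hE0, hEle⟩ := ih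
      have hEfin : μ E < ⊤ := lt_of_le_of_lt (measure_mono hES) hfin
      obtain ⟨F, hFE, hFm, hF0, hFle⟩ := aux_halve hna hEm hE0 hEfin
      refine ⟨F, hFE.trans hES, hFm, hF0, ?_⟩
      calc μ F ≤ μ E / 2 := hFle
        _ ≤ μ S * 2⁻¹ ^ n / 2 := by gcongr
        _ = μ S * 2⁻¹ ^ (n+1) := by
            rw [pow_succ, ← mul_assoc, div_eq_mul_inv]
  rcases le_or_gt (μ S) δ with h | h
  · exact ⟨S, subset_rfl, hS, h0, h⟩
  · obtain ⟨n, hn⟩ := ENNReal.exists_inv_two_pow_lt (a := δ / μ S)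
      (ENNReal.div_ne_zero.2 ⟨hδ.ne', hfin.ne⟩)
    obtain ⟨E, hES, hEm, hE0, hEle⟩ := key n
    refine ⟨E, hES, hEm, hE0, hEle.trans ?_⟩
    calc μ S * 2⁻¹ ^ n ≤ μ S * (δ / μ S) := by gcongr
      _ ≤ δ := ENNReal.mul_div_le

lemma aux_integral_indicator (Φ : YoungFunction) {E : Set X} (hE : MeasurableSet E)
    (t : ℝ) :
    ∫ x, Φ (E.indicator (fun _ => (1:ℝ)) x / t) ∂μ = Φ (1/t) * (μ E).toReal := by
  have h : (fun x => Φ.toFun (E.indicator (fun _ => (1:ℝ)) x / t))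
      = E.indicator (fun _ => Φ (1/t)) := by
    funext x
    by_cases hx : x ∈ E
    · simp [Set.indicator_of_mem hx]
    · simp [Set.indicator_of_notMem hx, Φ.map_zero]
  rw [show (fun x => Φ (E.indicator (fun _ => (1:ℝ)) x / t)) =
    (fun x => Φ.toFun (E.indicator (fun _ => (1:ℝ)) x / t)) from rfl, h,
    integral_indicator_const _ hE, smul_eq_mul, mul_comm]
  rfl

lemma aux_luxNorm_nonneg (Φ : YoungFunction) (f : X → ℝ) : 0 ≤ luxNorm Φ μ f :=
  Real.sInf_nonneg (fun _ hx => hx.1.le)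

end AuxMeasure

/-- over a non-atomic measure space, `M_u` is bounded iff `u = 0` a.e. -/
theorem multiplication_bounded_iff_zero_of_nonatomic
    {X : Type*} [MeasurableSpace X] (μ : Measure X) [SigmaFinite μ]
    (hna : NonAtomicOn μ Set.univ)
    (Φ₁ Φ₂ Φ₃ : YoungFunction)
    (hΦ : ∀ x y : ℝ, 0 ≤ x → 0 ≤ y → Φ₁ (x * y) ≤ Φ₂ x + Φ₃ y)
    (u : X → ℝ) (hu : Measurable u) :
    OrliczBounded Φ₁ Φ₂ μ (fun f x => u x * f x) ↔ u =ᵐ[μ] (0 : X → ℝ) := by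
  constructor
  · -- hard direction: bounded → u = 0 a.e.
    rintro ⟨C, hC, hbd⟩
    by_contra hne
    have h1 : μ {x | u x ≠ 0} ≠ 0 := by
      intro h
      apply hne
      rw [Filter.EventuallyEq, ae_iff]
      simpa using h
    set T : ℕ → Set X := fun n => (fun x => |u x|) ⁻¹' Set.Icc (1/((n:ℝ)+1)) ((n:ℝ)+1)
      with hT_def
    have hTsub : {x | u x ≠ 0} ⊆ ⋃ n, T n := by
      intro x hx
      have hx0 : 0 < |u x| := abs_pos.2 hx
      obtain ⟨n, hn⟩ := exists_nat_ge (max (1/|u x|) (|u x|))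
      refine Set.mem_iUnion.2 ⟨n, ?_, ?_⟩
      · have h1n : 1/|u x| ≤ (n:ℝ) := le_trans (le_max_left _ _) hn
        rw [div_le_iff₀ hx0] at h1n
        rw [div_le_iff₀ (by positivity : (0:ℝ) < (n:ℝ)+1)]
        nlinarith [hx0.le]
      · have := le_trans (le_max_right (1/|u x|) (|u x|)) hn
        simp only [Set.mem_setOf_eq]
        linarith
    obtain ⟨n, hTn⟩ : ∃ n, μ (T n) ≠ 0 := by
      by_contra hall
      push_neg at hall
      exact h1 (le_antisymm (le_trans (measure_mono hTsub)
        (le_of_eq (measure_iUnion_null hall))) (zero_le))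
    set ε := 1/((n:ℝ)+1) with hε_def
    set N := ((n:ℝ)+1) with hN_def
    have hε : 0 < ε := by positivity
    have hN : 0 < N := by positivity
    have hTnm : MeasurableSet (T n) := hu.abs (measurableSet_Icc)
    obtain ⟨m, hm⟩ : ∃ m, μ (T n ∩ spanningSets μ m) ≠ 0 := by
      by_contra hall
      push_neg at hall
      apply hTn
      have hTeq : T n = ⋃ m, T n ∩ spanningSets μ m := by
        rw [← Set.inter_iUnion, iUnion_spanningSets, Set.inter_univ]
      rw [hTeq]
      exact measure_iUnion_null hall
    set S₀ := T n ∩ spanningSets μ m with hS₀_def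
    have hS₀m : MeasurableSet S₀ := hTnm.inter (measurableSet_spanningSets μ m)
    have hS₀pos : 0 < μ S₀ := pos_iff_ne_zero.2 hm
    have hS₀fin : μ S₀ < ⊤ :=
      lt_of_le_of_lt (measure_mono Set.inter_subset_right) (measure_spanningSets_lt_top μ m)
    set y := 3*C/ε + 1 with hy_def
    have hy : 0 < y := by positivity
    have hΦ₃y : 0 < Φ₃ y :=
      lt_of_le_of_ne (Φ₃.nonneg y) (fun h => hy.ne' ((Φ₃.zero_iff' y).1 h.symm))
    obtain ⟨E, hES, hEm, hE0, hEle⟩ := aux_exists_small hna hS₀m hS₀pos hS₀fin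
      (δ := ENNReal.ofReal (1/(2*Φ₃ y))) (ENNReal.ofReal_pos.2 (by positivity))
    set mE := (μ E).toReal with hmE_def
    have hEfin : μ E ≠ ⊤ := (lt_of_le_of_lt hEle ENNReal.ofReal_lt_top).ne
    have hm0 : 0 < mE := ENNReal.toReal_pos hE0.ne' hEfin
    have hmle : mE ≤ 1/(2*Φ₃ y) := ENNReal.toReal_le_of_le_ofReal (by positivity) hEle
    have hΦ₃le : Φ₃ y ≤ 1/(2*mE) := by
      rw [le_div_iff₀ (by positivity)] at hmle ⊢
      nlinarith [hΦ₃y, hm0]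
    obtain ⟨s, hs, hΦ₂s⟩ := Φ₂.exists_eq (v := 1/(2*mE)) (by positivity)
    -- the test function
    set f := E.indicator (fun _ => (1:ℝ)) with hf_def
    have hfmeas : Measurable f := measurable_const.indicator hEm
    have hmem : MemOrlicz Φ₁ μ f := by
      refine ⟨hfmeas.aestronglyMeasurable, 1, one_pos, ?_⟩
      have heq : (fun x => Φ₁.toFun (1 * f x)) = E.indicator (fun _ => Φ₁ 1) := by
        funext x
        by_cases hx : x ∈ E
        · simp [hf_def, Set.indicator_of_mem hx]
        · simp [hf_def, Set.indicator_of_notMem hx, Φ₁.map_zero]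
      show Integrable (fun x => Φ₁.toFun (1 * f x)) μ
      rw [heq]
      exact (integrable_indicator_iff hEm).2 (integrableOn_const hEfin)
    -- upper bound for the Φ₁-norm
    have hΦ₁sy : Φ₁ (s*y) * mE ≤ 1 := by
      have h12 : Φ₁ (s*y) ≤ 1/mE := by
        calc Φ₁ (s*y) ≤ Φ₂ s + Φ₃ y := hΦ s y hs.le hy.le
          _ ≤ 1/(2*mE) + 1/(2*mE) := by rw [hΦ₂s]; linarith
          _ = 1/mE := by rw [← add_div]; rw [show ((1:ℝ)+1) = 2 from by norm_num]; rw [mul_comm, ← div_div, div_right_comm]; norm_num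
      calc Φ₁ (s*y) * mE ≤ (1/mE) * mE := by gcongr
        _ = 1 := by field_simp
    have hfup : luxNorm Φ₁ μ f ≤ 1/(s*y) := by
      apply csInf_le ⟨0, fun k hk => hk.1.le⟩
      refine ⟨by positivity, ?_⟩
      rw [hf_def, aux_integral_indicator Φ₁ hEm, one_div_one_div]
      exact hΦ₁sy
    -- pointwise facts about u on E
    have hE_u : ∀ x ∈ E, ε ≤ |u x| ∧ |u x| ≤ N := by
      intro x hx
      have := hES hx
      rw [hS₀_def] at this
      have hxT : x ∈ T n := this.1
      rw [hT_def] at hxT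
      exact ⟨hxT.1, hxT.2⟩
    -- integrability and bounds for the image function, for any k > 0
    have key : ∀ k : ℝ, 0 < k →
        Integrable (fun x => Φ₂.toFun ((u x * f x)/k)) μ ∧
        (∀ x, E.indicator (fun _ => Φ₂ (ε/k)) x ≤ Φ₂.toFun ((u x * f x)/k)) ∧
        (∀ x, Φ₂.toFun ((u x * f x)/k) ≤ E.indicator (fun _ => Φ₂ (N/k)) x) := by
      intro k hk
      have habs : ∀ x ∈ E, Φ₂.toFun ((u x * f x)/k) = Φ₂ (|u x|/k) := by
        intro x hx
        rw [hf_def]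
        simp only [Set.indicator_of_mem hx, mul_one]
        rw [← Φ₂.abs_map (u x / k), abs_div, abs_of_pos hk]
      have hzero : ∀ x, x ∉ E → Φ₂.toFun ((u x * f x)/k) = 0 := by
        intro x hx
        rw [hf_def]
        simp only [Set.indicator_of_notMem hx, mul_zero, zero_div, Φ₂.map_zero]
      have hup : ∀ x, Φ₂.toFun ((u x * f x)/k) ≤ E.indicator (fun _ => Φ₂ (N/k)) x := by
        intro x
        by_cases hx : x ∈ E
        · rw [habs x hx, Set.indicator_of_mem hx]
          exact Φ₂.mono (by positivity) (by gcongr; exact (hE_u x hx).2)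
        · rw [hzero x hx, Set.indicator_of_notMem hx]
      have hlow : ∀ x, E.indicator (fun _ => Φ₂ (ε/k)) x ≤ Φ₂.toFun ((u x * f x)/k) := by
        intro x
        by_cases hx : x ∈ E
        · rw [habs x hx, Set.indicator_of_mem hx]
          exact Φ₂.mono (by positivity) (by gcongr; exact (hE_u x hx).1)
        · rw [hzero x hx, Set.indicator_of_notMem hx]
      have hasm : AEStronglyMeasurable (fun x => Φ₂.toFun ((u x * f x)/k)) μ :=
        (Φ₂.continuous'.measurable.comp ((hu.mul hfmeas).div_const k)).aestronglyMeasurable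
      have hintU : Integrable (E.indicator (fun _ => Φ₂ (N/k))) μ :=
        (integrable_indicator_iff hEm).2 (integrableOn_const hEfin)
      refine ⟨hintU.mono' hasm (Filter.Eventually.of_forall fun x => ?_), hlow, hup⟩
      rw [Real.norm_of_nonneg (Φ₂.nonneg _)]
      exact hup x
    have hintLow : ∀ k : ℝ, Integrable (E.indicator (fun _ => Φ₂ (ε/k))) μ :=
      fun k => (integrable_indicator_iff hEm).2 (integrableOn_const hEfin)
    -- lower bound for the Φ₂-norm of u * f
    have hglo : ε/(3*s) ≤ luxNorm Φ₂ μ (fun x => u x * f x) := by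
      have hk₀ : (0:ℝ) < N/s := by positivity
      have hk₀mem : N/s ∈ {k : ℝ | 0 < k ∧ ∫ x, Φ₂ ((u x * f x) / k) ∂μ ≤ 1} := by
        refine ⟨hk₀, ?_⟩
        obtain ⟨hint, _, hup⟩ := key (N/s) hk₀
        calc ∫ x, Φ₂ ((u x * f x) / (N/s)) ∂μ
            ≤ ∫ x, E.indicator (fun _ => Φ₂ (N/(N/s))) x ∂μ := by
              refine integral_mono hint ?_ hup
              exact (integrable_indicator_iff hEm).2
                (integrableOn_const hEfin)
          _ = Φ₂ (N/(N/s)) * mE := by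
              rw [integral_indicator_const _ hEm, smul_eq_mul, mul_comm]
              rfl
          _ = 1/(2*mE) * mE := by
              rw [div_div_cancel₀]
              · rw [hΦ₂s]
              · exact hN.ne'
          _ ≤ 1 := by rw [one_div_mul_eq_div, div_le_one (by positivity)]; linarith
      apply le_csInf ⟨N/s, hk₀mem⟩
      rintro k ⟨hk, hint1⟩
      by_contra hlt
      push_neg at hlt
      have h3s : 3*s < ε/k := by
        rw [lt_div_iff₀ hk]
        rw [lt_div_iff₀ (by positivity : (0:ℝ) < 3*s)] at hlt
        nlinarith [hlt]
      have hmono : 3/(2*mE) ≤ Φ₂ (ε/k) := by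
        calc 3/(2*mE) = 3 * (1/(2*mE)) := by ring
          _ = 3 * Φ₂ s := by rw [hΦ₂s]
          _ ≤ Φ₂ (3*s) := Φ₂.three_mul s
          _ ≤ Φ₂ (ε/k) := Φ₂.mono (by positivity) h3s.le
      obtain ⟨hint, hlow, _⟩ := key k hk
      have hge : Φ₂ (ε/k) * mE ≤ ∫ x, Φ₂ ((u x * f x) / k) ∂μ := by
        calc Φ₂ (ε/k) * mE = ∫ x, E.indicator (fun _ => Φ₂ (ε/k)) x ∂μ := by
              rw [integral_indicator_const _ hEm, smul_eq_mul, mul_comm]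
              rfl
          _ ≤ ∫ x, Φ₂ ((u x * f x) / k) ∂μ := integral_mono (hintLow k) hint hlow
      have : (3:ℝ)/2 ≤ 1 := by
        have h32 : (3:ℝ)/2 = (3/(2*mE)) * mE := by field_simp
        calc (3:ℝ)/2 = (3/(2*mE)) * mE := h32
          _ ≤ Φ₂ (ε/k) * mE := by gcongr
          _ ≤ ∫ x, Φ₂ ((u x * f x) / k) ∂μ := hge
          _ ≤ 1 := hint1
      linarith
    -- combine
    have hkey := (hbd f hmem).2
    have hcomb : ε/(3*s) ≤ C * (1/(s*y)) :=
      le_trans hglo (le_trans hkey (mul_le_mul_of_nonneg_left hfup hC.le))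
    rw [mul_one_div, div_le_div_iff₀ (by positivity) (by positivity)] at hcomb
    have h2 : ε*y*s ≤ 3*C*s := by nlinarith [hcomb]
    have hcon : ε*y ≤ 3*C := (mul_le_mul_iff_of_pos_right hs).1 h2
    have hεy : ε * y = 3*C + ε := by
      rw [hy_def]
      field_simp
    linarith
  · -- easy direction: u = 0 a.e. → bounded
    intro hU
    refine ⟨1, one_pos, fun f hf => ?_⟩
    have hae : (fun x => u x * f x) =ᵐ[μ] (fun _ => (0:ℝ)) := by
      filter_upwards [hU] with x hx
      simp only [Pi.zero_apply] at hx
      simp [hx]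
    constructor
    · refine ⟨hu.aestronglyMeasurable.mul hf.1, 1, one_pos, ?_⟩
      have h0 : (fun _ => (0:ℝ)) =ᵐ[μ] (fun x => Φ₂.toFun (1 * (u x * f x))) := by
        filter_upwards [hae] with x hx
        simp [hx, Φ₂.map_zero]
      exact (integrable_zero _ _ _).congr h0
    · have hge : 0 ≤ luxNorm Φ₁ μ f := aux_luxNorm_nonneg Φ₁ f
      have hle : ∀ k : ℝ, 0 < k → luxNorm Φ₂ μ (fun x => u x * f x) ≤ k := by
        intro k hk
        apply csInf_le ⟨0, fun j hj => hj.1.le⟩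
        refine ⟨hk, ?_⟩
        have h0 : (fun x => Φ₂.toFun ((u x * f x)/k)) =ᵐ[μ] (fun _ => (0:ℝ)) := by
          filter_upwards [hae] with x hx
          simp [hx, Φ₂.map_zero]
        rw [show (∫ x, Φ₂ ((u x * f x) / k) ∂μ) = 0 from by
          rw [integral_congr_ae h0, integral_zero]]
        norm_num
      have hle0 : luxNorm Φ₂ μ (fun x => u x * f x) ≤ 0 := by
        by_contra h
        push_neg at h
        have := hle (luxNorm Φ₂ μ (fun x => u x * f x) / 2) (by linarith)
        linarith
      calc luxNorm Φ₂ μ (fun x => u x * f x) ≤ 0 := hle0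
        _ ≤ 1 * luxNorm Φ₁ μ f := by linarith
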